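/- An ideal I on ω is not tall if and only if FinBW(I) coincides with the class of sequentially compact Hausdorff spaces; in particular, if there is an infinite B ⊆ ω such that every subset of B lying in I is finite, then every sequentially compact Hausdorff space is in FinBW(I). -/

import Mathlib

open Set

/-- The ideal `Fin ⊗ Fin` on `ω²`: sets all but finitely many of whose
vertical sections are finite. -/
def FinFin : Set (Set (ℕ × ℕ)) :=
  {A | {n : ℕ | ¬ ({m : ℕ | (n, m) ∈ A}).Finite}.Finite}

/-- The `i`-th section of a subset of `ω³`. -/
def BIsec (i : ℕ) (A : Set (ℕ × ℕ × ℕ)) : Set (ℕ × ℕ) := {p | (i, p) ∈ A}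

/-- The ideal `BI` on `ω³`. -/
def BI : Set (Set (ℕ × ℕ × ℕ)) :=
  {A | ∃ k : ℕ, (∀ i < k, BIsec i A ∈ FinFin) ∧ ∀ i ≥ k, (BIsec i A).Finite}

/-- `I` is an ideal on `X`: contains all finite sets, closed under subsets and
finite unions, and proper. -/
def IsIdeal {X : Type*} (I : Set (Set X)) : Prop :=
  (∀ A : Set X, A.Finite → A ∈ I) ∧
  (∀ A B : Set X, A ∈ I → B ⊆ A → B ∈ I) ∧
  (∀ A B : Set X, A ∈ I → B ∈ I → A ∪ B ∈ I) ∧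
  (Set.univ : Set X) ∉ I

/-- A Hausdorff space is *boring* if it is sequentially compact and some finite
set receives the limits of all injective convergent sequences. -/
def Boring (X : Type*) [TopologicalSpace X] : Prop :=
  SeqCompactSpace X ∧ ∃ F : Finset X, ∀ (x : ℕ → X) (l : X),
    Function.Injective x → Filter.Tendsto x Filter.atTop (nhds l) → l ∈ F

/-- The sequence `(x n)_{n ∈ A}` converges to `l`. -/
def ConvAlong {X : Type*} [TopologicalSpace X] (A : Set ℕ) (x : ℕ → X) (l : X) : Prop :=
  ∀ U ∈ nhds l, {n ∈ A | x n ∉ U}.Finite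

/-- `X ∈ FinBW(I)`: every sequence converges along some `I`-positive index set. -/
def FinBW (I : Set (Set ℕ)) (X : Type*) [TopologicalSpace X] : Prop :=
  ∀ x : ℕ → X, ∃ A : Set ℕ, A ∉ I ∧ ∃ l : X, ConvAlong A x l

universe u

open Filter

section Aux0

variable {X : Type*} [TopologicalSpace X]

lemma convAlong_range {x : ℕ → X} {φ : ℕ → ℕ} (hφ : StrictMono φ) {l : X}
    (h : Tendsto (x ∘ φ) atTop (nhds l)) : ConvAlong (Set.range φ) x l := by
  intro U hU
  obtain ⟨N, hN⟩ := eventually_atTop.mp (h hU)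
  apply ((Set.finite_Iio N).image φ).subset
  rintro n ⟨⟨k, rfl⟩, hx⟩
  exact ⟨k, by by_contra h'; exact hx (hN k (le_of_not_gt h')), rfl⟩

lemma exists_subseq_of_convAlong {S : Set ℕ} (hS : S.Infinite) {x : ℕ → X} {l : X}
    (h : ConvAlong S x l) : ∃ φ : ℕ → ℕ, StrictMono φ ∧ Tendsto (x ∘ φ) atTop (nhds l) := by
  classical
  have : Infinite S := hS.to_subtype
  set e := Nat.orderEmbeddingOfSet S with he
  have hrange : Set.range e = S := Nat.orderEmbeddingOfSet_range S
  refine ⟨e, e.strictMono, ?_⟩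
  rw [Filter.tendsto_def]
  intro U hU
  have hBad : ({n ∈ S | x n ∉ U}).Finite := h U hU
  have hpre : (e ⁻¹' {n ∈ S | x n ∉ U}).Finite :=
    hBad.preimage (e.injective.injOn)
  obtain ⟨N, hN⟩ := hpre.bddAbove
  rw [mem_atTop_sets]
  refine ⟨N + 1, fun k hk => ?_⟩
  have hke : e k ∈ S := hrange ▸ Set.mem_range_self k
  by_contra hxk
  have : k ∈ e ⁻¹' {n ∈ S | x n ∉ U} := ⟨hke, hxk⟩
  exact absurd (hN this) (by omega)

lemma convAlong_map {Y : Type*} [TopologicalSpace Y] {f : X → Y} (hf : Continuous f)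
    {S : Set ℕ} {x : ℕ → X} {l : X} (h : ConvAlong S x l) : ConvAlong S (f ∘ x) (f l) := by
  intro U hU
  have := h (f ⁻¹' U) (hf.continuousAt.preimage_mem_nhds hU)
  exact this.subset fun n hn => ⟨hn.1, hn.2⟩

end Aux0
section Aux1

variable {X : Type*} [TopologicalSpace X] {I : Set (Set ℕ)}

lemma infinite_of_not_mem (hI : IsIdeal I) {A : Set ℕ} (hA : A ∉ I) : A.Infinite := by
  by_contra h
  rw [Set.not_infinite] at h
  exact hA (hI.1 A h)

lemma seqCompactSpace_of_conv
    (h : ∀ x : ℕ → X, ∃ S : Set ℕ, S.Infinite ∧ ∃ l, ConvAlong S x l) : SeqCompactSpace X := by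
  constructor
  intro x _
  obtain ⟨S, hS, l, hc⟩ := h x
  obtain ⟨φ, hφ, ht⟩ := exists_subseq_of_convAlong hS hc
  exact ⟨l, Set.mem_univ l, φ, hφ, ht⟩

lemma finBW_seqCompact (hI : IsIdeal I) (h : FinBW I X) : SeqCompactSpace X := by
  apply seqCompactSpace_of_conv
  intro x
  obtain ⟨A, hA, l, hc⟩ := h x
  exact ⟨A, infinite_of_not_mem hI hA, l, hc⟩

lemma key2 (hI : IsIdeal I) {B : Set ℕ} (hB : B.Infinite) (hBI : ∀ C ⊆ B, C ∈ I → C.Finite)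
    [SeqCompactSpace X] : FinBW I X := by
  classical
  intro x
  have : Infinite B := hB.to_subtype
  set e := Nat.orderEmbeddingOfSet B with he
  have hrange : Set.range e = B := Nat.orderEmbeddingOfSet_range B
  obtain ⟨l, φ, hφ, ht⟩ := SeqCompactSpace.tendsto_subseq (X := X) (x ∘ e)
  have hmono : StrictMono (e ∘ φ) := e.strictMono.comp hφ
  refine ⟨Set.range (e ∘ φ), ?_, l, convAlong_range hmono ht⟩
  intro hmem
  have hsub : Set.range (e ∘ φ) ⊆ B := by
    rintro n ⟨k, rfl⟩
    exact hrange ▸ Set.mem_range_self (φ k)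
  have hfin := hBI _ hsub hmem
  exact (Set.infinite_range_of_injective (hmono.injective)) hfin

end Aux1
def ADFam (I : Set (Set ℕ)) : Set (Set (Set ℕ)) :=
  {F | (∀ A ∈ F, A.Infinite ∧ A ∈ I) ∧ ∀ A ∈ F, ∀ B ∈ F, A ≠ B → (A ∩ B).Finite}

lemma exists_mad {I : Set (Set ℕ)}
    (htall : ∀ A : Set ℕ, A.Infinite → ∃ B ⊆ A, B.Infinite ∧ B ∈ I) :
    ∃ F ∈ ADFam I, ∀ R : Set ℕ, R.Infinite → ∃ A ∈ F, (R ∩ A).Infinite := by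
  have hub : ∀ c ⊆ ADFam I, IsChain (· ⊆ ·) c → ∃ ub ∈ ADFam I, ∀ s ∈ c, s ⊆ ub := by
    intro c hc hchain
    refine ⟨⋃₀ c, ⟨?_, ?_⟩, fun s hs => Set.subset_sUnion_of_mem hs⟩
    · rintro A ⟨f, hf, hA⟩
      exact (hc hf).1 A hA
    · rintro A ⟨f, hf, hA⟩ B ⟨g, hg, hB⟩ hne
      rcases hchain.total hf hg with h | h
      · exact (hc hg).2 A (h hA) B hB hne
      · exact (hc hf).2 A hA B (h hB) hne
  obtain ⟨F, hF⟩ := zorn_subset (ADFam I) hub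
  · refine ⟨F, hF.1, ?_⟩
    intro R hR
    by_contra hno
    push_neg at hno
    obtain ⟨C, hCR, hCinf, hCI⟩ := htall R hR
    have hCF : C ∉ F := fun h => hCinf ((hno C h).subset fun n hn => ⟨hCR hn, hn⟩)
    have hmem : insert C F ∈ ADFam I := by
      constructor
      · rintro A (rfl | hA)
        · exact ⟨hCinf, hCI⟩
        · exact hF.1.1 A hA
      · rintro A (rfl | hA) B (rfl | hB) hne
        · exact absurd rfl hne
        · exact (hno B hB).subset fun n hn => ⟨hCR hn.1, hn.2⟩
        · exact (hno A hA).subset fun n hn => ⟨hCR hn.2, hn.1⟩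
        · exact hF.1.2 A hA B hB hne
    exact hCF (hF.2 hmem (Set.subset_insert C F) (Set.mem_insert C F))

namespace Mrowka


variable (F : Set (Set ℕ))

abbrev MX := Option (ℕ ⊕ {A : Set ℕ // A ∈ F})

variable {F}

def mi (n : ℕ) : MX F := some (Sum.inl n)

def mp (A : {A : Set ℕ // A ∈ F}) : MX F := some (Sum.inr A)

@[simp] lemma mi_eq_mi {n m : ℕ} : (mi n : MX F) = mi m ↔ n = m := by simp [mi]
@[simp] lemma mp_eq_mp {A B : {A : Set ℕ // A ∈ F}} : (mp A : MX F) = mp B ↔ A = B := by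
  simp [mp]
@[simp] lemma mi_ne_mp {n : ℕ} {A : {A : Set ℕ // A ∈ F}} : (mi n : MX F) ≠ mp A := by
  simp [mi, mp]
@[simp] lemma mp_ne_mi {n : ℕ} {A : {A : Set ℕ // A ∈ F}} : (mp A : MX F) ≠ mi n := by
  simp [mi, mp]
@[simp] lemma none_ne_mi {n : ℕ} : (none : MX F) ≠ mi n := by simp [mi]
@[simp] lemma mi_ne_none {n : ℕ} : (mi n : MX F) ≠ none := by simp [mi]
@[simp] lemma none_ne_mp {A : {A : Set ℕ // A ∈ F}} : (none : MX F) ≠ mp A := by simp [mp]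
@[simp] lemma mp_ne_none {A : {A : Set ℕ // A ∈ F}} : (mp A : MX F) ≠ none := by simp [mp]

variable (F)

def mOpen (U : Set (MX F)) : Prop :=
  (∀ A : {A : Set ℕ // A ∈ F}, mp A ∈ U → ((A : Set ℕ) \ {n | mi n ∈ U}).Finite) ∧
  (none ∈ U → ∃ G : Finset {A : Set ℕ // A ∈ F},
    (∀ A, A ∉ G → mp A ∈ U) ∧ ({n : ℕ | mi n ∉ U} \ ⋃ A ∈ G, (A : Set ℕ)).Finite)

instance : TopologicalSpace (MX F) where
  IsOpen := mOpen F
  isOpen_univ := by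
    refine ⟨fun A _ => ?_, fun _ => ⟨∅, fun A _ => Set.mem_univ _, ?_⟩⟩ <;> simp
  isOpen_inter := by
    classical
    rintro U V ⟨hU1, hU2⟩ ⟨hV1, hV2⟩
    constructor
    · intro A hA
      apply ((hU1 A hA.1).union (hV1 A hA.2)).subset
      rintro n ⟨hnA, hn⟩
      by_cases h : mi n ∈ U
      · exact Or.inr ⟨hnA, fun h' => hn ⟨h, h'⟩⟩
      · exact Or.inl ⟨hnA, h⟩
    · rintro ⟨h1, h2⟩
      obtain ⟨G1, hG1, hG1f⟩ := hU2 h1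
      obtain ⟨G2, hG2, hG2f⟩ := hV2 h2
      refine ⟨G1 ∪ G2, fun A hA => ?_, ?_⟩
      · rw [Finset.mem_union] at hA
        push_neg at hA
        exact ⟨hG1 A hA.1, hG2 A hA.2⟩
      · apply (hG1f.union hG2f).subset
        rintro n ⟨hn, hnG⟩
        simp only [Set.mem_iUnion, not_exists] at hnG
        by_cases h : mi n ∈ U
        · refine Or.inr ⟨fun h' => hn ⟨h, h'⟩, ?_⟩
          simp only [Set.mem_iUnion, not_exists]
          exact fun A hA h' => hnG A (Finset.mem_union_right _ hA) h'
        · refine Or.inl ⟨h, ?_⟩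
          simp only [Set.mem_iUnion, not_exists]
          exact fun A hA h' => hnG A (Finset.mem_union_left _ hA) h'
  isOpen_sUnion := by
    intro s hs
    constructor
    · rintro A ⟨t, ht, hAt⟩
      apply ((hs t ht).1 A hAt).subset
      rintro n ⟨hnA, hn⟩
      exact ⟨hnA, fun h' => hn ⟨t, ht, h'⟩⟩
    · rintro ⟨t, ht, hnt⟩
      obtain ⟨G, hG, hGf⟩ := (hs t ht).2 hnt
      refine ⟨G, fun A hA => ⟨t, ht, hG A hA⟩, ?_⟩
      apply hGf.subset
      rintro n ⟨hn, hnG⟩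
      exact ⟨fun h' => hn ⟨t, ht, h'⟩, hnG⟩

variable {F}

lemma isOpen_iff {U : Set (MX F)} : IsOpen U ↔ mOpen F U := Iff.rfl

lemma isOpen_mi (n : ℕ) : IsOpen ({mi n} : Set (MX F)) := by
  rw [isOpen_iff]
  exact ⟨fun A hA => absurd hA (by simp), fun h => absurd h (by simp)⟩

lemma isOpen_compl_mi (n : ℕ) : IsOpen ({mi n}ᶜ : Set (MX F)) := by
  rw [isOpen_iff]
  refine ⟨fun A _ => ?_, fun _ => ⟨∅, fun B _ => by simp, ?_⟩⟩
  · apply (Set.finite_singleton n).subset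
    rintro m ⟨_, hm⟩
    simp only [Set.mem_compl_iff, Set.mem_singleton_iff, not_not, mem_setOf_eq] at hm
    simp_all [mi_eq_mi.mp hm]
  · apply (Set.finite_singleton n).subset
    rintro m ⟨hm, _⟩
    simp only [mem_setOf_eq, Set.mem_compl_iff, Set.mem_singleton_iff, not_not] at hm
    simp [mi_eq_mi.mp hm]

/-- basic neighborhood of `mp A` with tail `T`. -/
def U2 (A : {A : Set ℕ // A ∈ F}) (T : Set ℕ) : Set (MX F) := insert (mp A) (mi '' T)

lemma mem_U2_mi {A : {A : Set ℕ // A ∈ F}} {T : Set ℕ} {n : ℕ} :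
    (mi n : MX F) ∈ U2 A T ↔ n ∈ T := by
  simp only [U2, Set.mem_insert_iff, Set.mem_image]
  constructor
  · rintro (h | ⟨m, hm, h⟩)
    · exact absurd h mi_ne_mp
    · exact mi_eq_mi.mp h ▸ hm
  · exact fun h => Or.inr ⟨n, h, rfl⟩

lemma isOpen_U2 (A : {A : Set ℕ // A ∈ F}) (T : Set ℕ) (hfin : ((A : Set ℕ) \ T).Finite) :
    IsOpen (U2 A T) := by
  rw [isOpen_iff]
  constructor
  · intro B hB
    have hBA : B = A := by
      rcases hB with h | ⟨m, _, h⟩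
      · exact mp_eq_mp.mp h
      · exact absurd h mi_ne_mp
    subst hBA
    apply hfin.subset
    rintro n ⟨hnA, hn⟩
    exact ⟨hnA, fun h' => hn (mem_U2_mi.mpr h')⟩
  · rintro (h | ⟨m, _, h⟩)
    · exact absurd h none_ne_mp
    · exact absurd h mi_ne_none

/-- basic neighborhood of `∞` avoiding `A`. -/
def U3 (A : {A : Set ℕ // A ∈ F}) : Set (MX F) :=
  {y | y = none ∨ (∃ B, B ≠ A ∧ y = mp B) ∨ ∃ n, n ∉ (A : Set ℕ) ∧ y = mi n}

lemma mem_U3_mi {A : {A : Set ℕ // A ∈ F}} {n : ℕ} :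
    (mi n : MX F) ∈ U3 A ↔ n ∉ (A : Set ℕ) := by
  simp only [U3, mem_setOf_eq]
  constructor
  · rintro (h | ⟨B, _, h⟩ | ⟨m, hm, h⟩)
    · exact absurd h mi_ne_none
    · exact absurd h mi_ne_mp
    · rwa [mi_eq_mi.mp h]
  · exact fun h => Or.inr (Or.inr ⟨n, h, rfl⟩)

lemma mem_U3_mp {A B : {A : Set ℕ // A ∈ F}} : (mp B : MX F) ∈ U3 A ↔ B ≠ A := by
  simp only [U3, mem_setOf_eq]
  constructor
  · rintro (h | ⟨B', hB', h⟩ | ⟨m, _, h⟩)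
    · exact absurd h mp_ne_none
    · rwa [mp_eq_mp.mp h]
    · exact absurd h mp_ne_mi
  · exact fun h => Or.inr (Or.inl ⟨B, h, rfl⟩)

lemma isOpen_U3 (hAD : ∀ A ∈ F, ∀ B ∈ F, A ≠ B → (A ∩ B).Finite)
    (A : {A : Set ℕ // A ∈ F}) : IsOpen (U3 A) := by
  rw [isOpen_iff]
  constructor
  · intro B hB
    have hBA : B ≠ A := mem_U3_mp.mp hB
    apply (hAD B B.2 A A.2 (fun h => hBA (Subtype.ext h))).subset
    rintro n ⟨hnB, hn⟩
    refine ⟨hnB, ?_⟩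
    by_contra h'
    exact hn (by rw [mem_setOf_eq, mem_U3_mi]; exact h')
  · intro _
    refine ⟨{A}, fun B hB => mem_U3_mp.mpr (by simpa using hB), ?_⟩
    apply Set.finite_empty.subset
    rintro n ⟨hn, hnG⟩
    simp only [mem_setOf_eq, mem_U3_mi, not_not] at hn
    exact hnG (by simpa using hn)

lemma t2 (hAD : ∀ A ∈ F, ∀ B ∈ F, A ≠ B → (A ∩ B).Finite) : T2Space (MX F) := by
  constructor
  intro x y hxy
  have hdj2 : ∀ (B : {A : Set ℕ // A ∈ F}), Disjoint (U3 B) (U2 B (B : Set ℕ)) := by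
    intro B
    rw [Set.disjoint_left]
    intro z hz1 hz2
    simp only [U2, Set.mem_insert_iff, Set.mem_image] at hz2
    rcases hz2 with rfl | ⟨k, hk, rfl⟩
    · exact mem_U3_mp.mp hz1 rfl
    · exact mem_U3_mi.mp hz1 hk
  have hdj6 : ∀ (n : ℕ) (B : {A : Set ℕ // A ∈ F}),
      Disjoint ({mi n} : Set (MX F)) (U2 B ((B : Set ℕ) \ {n})) := by
    intro n B
    rw [Set.disjoint_left]
    rintro z rfl hz2
    simp only [U2, Set.mem_insert_iff, Set.mem_image] at hz2
    rcases hz2 with h | ⟨k, hk, h⟩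
    · exact mi_ne_mp h
    · rw [mi_eq_mi.mp h] at hk
      exact hk.2 rfl
  have hU2fin : ∀ (n : ℕ) (B : {A : Set ℕ // A ∈ F}),
      ((B : Set ℕ) \ ((B : Set ℕ) \ {n})).Finite := by
    intro n B
    apply (Set.finite_singleton n).subset
    rintro k ⟨hkB, hk⟩
    simp only [Set.mem_diff, not_and, not_not] at hk
    exact hk hkB
  rcases x with _ | (n | A) <;> rcases y with _ | (m | B)
  · exact absurd rfl hxy
  · exact ⟨{mi m}ᶜ, {mi m}, isOpen_compl_mi m, isOpen_mi m, none_ne_mi, rfl,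
      disjoint_compl_left⟩
  · exact ⟨U3 B, U2 B (B : Set ℕ), isOpen_U3 hAD B, isOpen_U2 B _ (by simp), Or.inl rfl,
      Or.inl rfl, hdj2 B⟩
  · exact ⟨{mi n}, {mi n}ᶜ, isOpen_mi n, isOpen_compl_mi n, rfl, none_ne_mi,
      disjoint_compl_right⟩
  · refine ⟨{mi n}, {mi m}, isOpen_mi n, isOpen_mi m, rfl, rfl, ?_⟩
    rw [Set.disjoint_singleton]
    exact hxy
  · exact ⟨{mi n}, U2 B ((B : Set ℕ) \ {n}), isOpen_mi n, isOpen_U2 B _ (hU2fin n B), rfl,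
      Or.inl rfl, hdj6 n B⟩
  · exact ⟨U2 A (A : Set ℕ), U3 A, isOpen_U2 A _ (by simp), isOpen_U3 hAD A, Or.inl rfl,
      Or.inl rfl, (hdj2 A).symm⟩
  · exact ⟨U2 A ((A : Set ℕ) \ {m}), {mi m}, isOpen_U2 A _ (hU2fin m A), isOpen_mi m,
      Or.inl rfl, rfl, (hdj6 m A).symm⟩
  · have hne : A ≠ B := fun h => hxy (by rw [h])
    refine ⟨U2 A ((A : Set ℕ) \ (B : Set ℕ)), U2 B ((B : Set ℕ) \ (A : Set ℕ)),
      isOpen_U2 A _ ?_, isOpen_U2 B _ ?_, Or.inl rfl, Or.inl rfl, ?_⟩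
    · apply (hAD A A.2 B B.2 (fun h => hne (Subtype.ext h))).subset
      rintro k ⟨hkA, hk⟩
      simp only [Set.mem_diff, not_and, not_not] at hk
      exact ⟨hkA, hk hkA⟩
    · apply (hAD B B.2 A A.2 (fun h => hne (Subtype.ext h.symm))).subset
      rintro k ⟨hkB, hk⟩
      simp only [Set.mem_diff, not_and, not_not] at hk
      exact ⟨hkB, hk hkB⟩
    · rw [Set.disjoint_left]
      intro z hz1 hz2
      simp only [U2, Set.mem_insert_iff, Set.mem_image] at hz1 hz2
      rcases hz1 with rfl | ⟨k, hk, rfl⟩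
      · rcases hz2 with h | ⟨k, _, h⟩
        · exact hne (mp_eq_mp.mp h)
        · exact mi_ne_mp h
      · rcases hz2 with h | ⟨k', hk', h⟩
        · exact mi_ne_mp h
        · rw [mi_eq_mi.mp h] at hk'
          exact hk'.2 hk.1

lemma conv_const {X : Type*} [TopologicalSpace X] {x : ℕ → X} {v : X}
    {S : Set ℕ} (hS : ∀ n ∈ S, x n = v) : ConvAlong S x v := by
  intro U hU
  apply Set.finite_empty.subset
  rintro n ⟨hn, hnU⟩
  exact hnU ((hS n hn).symm ▸ mem_of_mem_nhds hU)

lemma conv_all (hMAD : ∀ R : Set ℕ, R.Infinite → ∃ A ∈ F, (R ∩ A).Infinite)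
    (x : ℕ → MX F) : ∃ S : Set ℕ, S.Infinite ∧ ∃ l, ConvAlong S x l := by
  by_cases hfib : ∃ v, {n | x n = v}.Infinite
  · obtain ⟨v, hv⟩ := hfib
    exact ⟨_, hv, v, conv_const fun n hn => hn⟩
  · push_neg at hfib
    by_cases hN : {n | ∃ m, x n = mi m}.Infinite
    · set R := {m : ℕ | ∃ n, x n = mi m} with hRdef
      have hsub : ∀ T : Set ℕ, T.Finite → {n | ∃ m ∈ T, x n = mi m}.Finite := by
        intro T hT
        apply (hT.biUnion (fun m (_ : m ∈ T) => hfib (mi m))).subset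
        rintro n ⟨m, hm, hxm⟩
        exact Set.mem_biUnion hm hxm
      have hR : R.Infinite := by
        by_contra h
        rw [Set.not_infinite] at h
        apply hN
        apply (hsub R h).subset
        rintro n ⟨m, hxm⟩
        exact ⟨m, ⟨n, hxm⟩, hxm⟩
      obtain ⟨A, hAF, hRA⟩ := hMAD R hR
      set S := {n | ∃ m ∈ A, x n = mi m} with hSdef
      have hS : S.Infinite := by
        by_contra h
        rw [Set.not_infinite] at h
        apply hRA
        have hone : ∀ n : ℕ, {m : ℕ | x n = mi m}.Finite := by
          intro n
          apply Set.Subsingleton.finite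
          intro m1 h1 m2 h2
          exact mi_eq_mi.mp (h1.symm.trans h2)
        apply (h.biUnion (fun n (_ : n ∈ S) => hone n)).subset
        rintro m ⟨⟨n, hxm⟩, hmA⟩
        exact Set.mem_biUnion (show n ∈ S from ⟨m, hmA, hxm⟩) hxm
      refine ⟨S, hS, mp ⟨A, hAF⟩, ?_⟩
      intro U hU
      obtain ⟨V, hVU, hV, hmV⟩ := mem_nhds_iff.mp hU
      have hT : ((A : Set ℕ) \ {m | (mi m : MX F) ∈ V}).Finite := hV.1 ⟨A, hAF⟩ hmV
      apply (hsub _ hT).subset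
      rintro n ⟨⟨m, hmA, hxm⟩, hnU⟩
      exact ⟨m, ⟨hmA, fun hmV' => hnU (hVU (hxm ▸ hmV'))⟩, hxm⟩
    · by_cases hP : {n | ∃ A, x n = mp A}.Infinite
      · refine ⟨_, hP, none, ?_⟩
        intro U hU
        obtain ⟨V, hVU, hV, hmV⟩ := mem_nhds_iff.mp hU
        obtain ⟨G, hG, _⟩ := hV.2 hmV
        apply (G.finite_toSet.biUnion (fun A (_ : A ∈ (G : Set _)) => hfib (mp A))).subset
        rintro n ⟨⟨A, hA⟩, hnU⟩
        refine Set.mem_biUnion (show A ∈ (G : Set _) from ?_) hA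
        by_contra hAG
        exact hnU (hVU (hA ▸ hG A hAG))
      · exfalso
        rw [Set.not_infinite] at hN hP
        have : (Set.univ : Set ℕ).Finite := by
          apply ((hfib none).union (hN.union hP)).subset
          intro n _
          rcases hx : x n with _ | (m | A)
          · exact Or.inl hx
          · exact Or.inr (Or.inl ⟨m, hx⟩)
          · exact Or.inr (Or.inr ⟨A, hx⟩)
        exact Set.infinite_univ this

lemma not_finBW {I : Set (Set ℕ)} (hI : IsIdeal I)
    (hAD : ∀ A ∈ F, ∀ B ∈ F, A ≠ B → (A ∩ B).Finite)
    (hFI : ∀ A ∈ F, A ∈ I)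
    (hMAD : ∀ R : Set ℕ, R.Infinite → ∃ A ∈ F, (R ∩ A).Infinite) :
    ¬ FinBW I (MX F) := by
  intro h
  obtain ⟨S, hSI, l, hc⟩ := h mi
  have hSinf : S.Infinite := infinite_of_not_mem hI hSI
  rcases l with _ | (m | A)
  · obtain ⟨A, hAF, hSA⟩ := hMAD S hSinf
    have hU := hc (U3 ⟨A, hAF⟩) ((isOpen_U3 hAD ⟨A, hAF⟩).mem_nhds (Or.inl rfl))
    apply hSA
    apply hU.subset
    rintro n ⟨hnS, hnA⟩
    exact ⟨hnS, fun h' => (mem_U3_mi.mp h') hnA⟩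
  · have hU := hc {mi m} ((isOpen_mi m).mem_nhds rfl)
    apply hSinf
    apply (hU.union (Set.finite_singleton m)).subset
    intro n hnS
    by_cases h' : n = m
    · exact Or.inr h'
    · exact Or.inl ⟨hnS, fun he => h' (mi_eq_mi.mp he)⟩
  · have hU := hc (U2 A (A : Set ℕ)) ((isOpen_U2 A _ (by simp)).mem_nhds (Or.inl rfl))
    apply hSI
    have h1 : (S \ (A : Set ℕ)) ∈ I := by
      apply hI.1
      apply hU.subset
      rintro n ⟨hnS, hnA⟩
      exact ⟨hnS, fun h' => hnA (mem_U2_mi.mp h')⟩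
    have h2 : S ⊆ (A : Set ℕ) ∪ (S \ (A : Set ℕ)) := by
      intro n hn
      by_cases h' : n ∈ (A : Set ℕ)
      · exact Or.inl h'
      · exact Or.inr ⟨hn, h'⟩
    exact hI.2.1 _ S (hI.2.2.1 _ _ (hFI A A.2) h1) h2

end Mrowka

section Transfer
variable {Y : Type} [TopologicalSpace Y] {I : Set (Set ℕ)}

lemma conv_ulift (h : ∀ x : ℕ → Y, ∃ S : Set ℕ, S.Infinite ∧ ∃ l, ConvAlong S x l) :
    ∀ x : ℕ → ULift.{u} Y, ∃ S : Set ℕ, S.Infinite ∧ ∃ l, ConvAlong S x l := by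
  intro x
  obtain ⟨S, hS, l, hc⟩ := h (fun n => (x n).down)
  refine ⟨S, hS, ULift.up l, ?_⟩
  have h2 := convAlong_map (Y := ULift.{u} Y) (f := ULift.up)
    (Homeomorph.ulift.symm.continuous) hc
  have he : (ULift.up ∘ fun n => (x n).down) = x := by
    funext n
    rfl
  rwa [he] at h2

lemma finBW_ulift (h : FinBW I (ULift.{u} Y)) : FinBW I Y := by
  intro x
  obtain ⟨S, hSI, l, hc⟩ := h (fun n => ULift.up (x n))
  refine ⟨S, hSI, l.down, ?_⟩
  have h2 := convAlong_map (Y := Y) (f := ULift.down)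
    (Homeomorph.ulift.continuous) hc
  have he : (ULift.down ∘ fun n => ULift.up (x n)) = x := by
    funext n
    rfl
  rwa [he] at h2

end Transfer


theorem stmt_19 (I : Set (Set ℕ)) (hI : IsIdeal I) :
    ((¬ ∀ A : Set ℕ, A.Infinite → ∃ B ⊆ A, B.Infinite ∧ B ∈ I) ↔
      ∀ (X : Type u) [TopologicalSpace X] [T2Space X], (FinBW I X ↔ SeqCompactSpace X)) ∧
    ((∃ B : Set ℕ, B.Infinite ∧ ∀ C ⊆ B, C ∈ I → C.Finite) →
      ∀ (X : Type u) [TopologicalSpace X] [T2Space X] [SeqCompactSpace X], FinBW I X) := by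
  constructor
  · constructor
    · intro hnt X _ _
      push_neg at hnt
      obtain ⟨B, hBinf, hB⟩ := hnt
      have hB' : ∀ C ⊆ B, C ∈ I → C.Finite := by
        intro C hCB hCI
        by_contra hCf
        rw [← Set.not_infinite, not_not] at hCf
        exact hB C hCB hCf hCI
      constructor
      · exact fun h => finBW_seqCompact hI h
      · intro hsc
        exact key2 hI hBinf hB'
    · intro hall htall
      obtain ⟨F, hF, hMAD⟩ := exists_mad htall
      haveI : T2Space (Mrowka.MX F) := Mrowka.t2 hF.2
      have hconv := Mrowka.conv_all hMAD
      have hnotfin := Mrowka.not_finBW hI hF.2 (fun A hA => (hF.1 A hA).2) hMAD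
      haveI : T2Space (ULift.{u} (Mrowka.MX F)) := Homeomorph.ulift.isEmbedding.t2Space
      haveI h2 : SeqCompactSpace (ULift.{u} (Mrowka.MX F)) :=
        seqCompactSpace_of_conv (conv_ulift hconv)
      have h3 := (hall (ULift.{u} (Mrowka.MX F))).mpr h2
      exact hnotfin (finBW_ulift h3)
  · rintro ⟨B, hBinf, hB⟩ X _ _ _
    exact key2 hI hBinf hB
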